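/- For the Newtonian revolving orbit problem with k > 0, 0 < κ < L², and energy -k²/(2(L²-κ)) < E < 0, the quantity Θ = θ + (L/sqrt(L²-κ))·arctan((L² - κ - kr)/(r r' sqrt(L²-κ))) is constant in time along solutions of the polar equations r'' = r(θ')² - k/r² - κ/r³, θ'' = -2θ'r'/r, on any interval where r' ≠ 0. -/

import Mathlib

/-- For the Newtonian revolving orbit problem, the angular quantity
`Θ = θ + (L/√(L²-κ)) arctan((L² - κ - kr)/(r r' √(L²-κ)))` is constant
on any interval where `r' ≠ 0`. -/
theorem revolving_orbit_angular_quantity_constant (k κ a b L E : ℝ)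
    (hk : 0 < k) (hκ : 0 < κ) (hκL : κ < L ^ 2)
    (r θ : ℝ → ℝ) (hrC : ContDiff ℝ 2 r) (hθC : ContDiff ℝ 2 θ)
    (hrpos : ∀ t ∈ Set.Ioo a b, 0 < r t)
    (hrv : ∀ t ∈ Set.Ioo a b, deriv r t ≠ 0)
    (heom1 : ∀ t ∈ Set.Ioo a b,
      deriv (deriv r) t = r t * (deriv θ t) ^ 2 - k / (r t) ^ 2 - κ / (r t) ^ 3)
    (heom2 : ∀ t ∈ Set.Ioo a b,
      deriv (deriv θ) t = -2 * deriv θ t * deriv r t / r t)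
    (hLdef : ∀ t ∈ Set.Ioo a b, deriv θ t * (r t) ^ 2 = L)
    (hEdef : ∀ t ∈ Set.Ioo a b,
      (deriv r t) ^ 2 / 2 + (L ^ 2 - κ) / (2 * (r t) ^ 2) - k / r t = E)
    (hE1 : -k ^ 2 / (2 * (L ^ 2 - κ)) < E) (hE2 : E < 0) :
    ∀ t₁ ∈ Set.Ioo a b, ∀ t₂ ∈ Set.Ioo a b,
      θ t₁ + (L / Real.sqrt (L ^ 2 - κ)) *
        Real.arctan ((L ^ 2 - κ - k * r t₁) / (r t₁ * deriv r t₁ * Real.sqrt (L ^ 2 - κ)))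
      = θ t₂ + (L / Real.sqrt (L ^ 2 - κ)) *
        Real.arctan ((L ^ 2 - κ - k * r t₂) / (r t₂ * deriv r t₂ * Real.sqrt (L ^ 2 - κ))) := by
  have hApos : 0 < L ^ 2 - κ := by linarith
  set A : ℝ := L ^ 2 - κ with hAdef
  set s : ℝ := Real.sqrt A with hsdef
  have hs2 : s ^ 2 = A := Real.sq_sqrt hApos.le
  have hspos : 0 < s := Real.sqrt_pos.mpr hApos
  have hsne : s ≠ 0 := hspos.ne'
  have hθd : Differentiable ℝ θ := hθC.differentiable (by norm_num)
  have hrd : Differentiable ℝ r := hrC.differentiable (by norm_num)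
  have hr'd : Differentiable ℝ (deriv r) := by
    have h2 : ContDiff ℝ (1 + 1) r := by norm_num at hrC ⊢; exact hrC
    exact ((contDiff_succ_iff_deriv.mp h2).2.2).differentiable (by norm_num)
  set Θ : ℝ → ℝ := fun t => θ t + (L / s) *
      Real.arctan ((A - k * r t) / (r t * deriv r t * s)) with hΘdef
  have key : ∀ t ∈ Set.Ioo a b, HasDerivAt Θ 0 t := by
    intro t ht
    have hR : 0 < r t := hrpos t ht
    have hRne : r t ≠ 0 := hR.ne'
    have hV : deriv r t ≠ 0 := hrv t ht
    set R := r t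
    set V := deriv r t
    have hθ' : deriv θ t = L / R ^ 2 := by
      have := hLdef t ht
      field_simp
      linarith
    have hr'' : deriv (deriv r) t = A / R ^ 3 - k / R ^ 2 := by
      rw [heom1 t ht, hθ', hAdef, show r t = R from rfl]
      field_simp
      ring
    have hEn : V ^ 2 * R ^ 2 = 2 * E * R ^ 2 + 2 * k * R - A := by
      have h := hEdef t ht
      have h2 : (2 * R) * (V ^ 2 * R ^ 2) = (2 * R) * (2 * E * R ^ 2 + 2 * k * R - A) := by
        rw [show r t = R from rfl, show deriv r t = V from rfl] at h
        field_simp at h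
        linear_combination (2 * R) * h
      exact mul_left_cancel₀ (by positivity) h2
    -- derivative of the inner function
    have hnum : HasDerivAt (fun t => A - k * r t) (-(k * V)) t := by
      simpa using (((hrd t).hasDerivAt.const_mul k).const_sub A)
    have hden : HasDerivAt (fun t => r t * deriv r t * s)
        ((V * V + R * deriv (deriv r) t) * s) t := by
      simpa [mul_comm] using
        (((hrd t).hasDerivAt.mul (hr'd t).hasDerivAt)).mul_const s
    have hdenne : R * V * s ≠ 0 := by
      exact mul_ne_zero (mul_ne_zero hRne hV) hsne
    have hu : HasDerivAt (fun t => (A - k * r t) / (r t * deriv r t * s))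
        ((-(k * V) * (R * V * s) - (A - k * R) * ((V * V + R * deriv (deriv r) t) * s))
          / (R * V * s) ^ 2) t := hnum.div hden hdenne
    have harc : HasDerivAt (fun t => Real.arctan ((A - k * r t) / (r t * deriv r t * s)))
        ((1 / (1 + ((A - k * R) / (R * V * s)) ^ 2)) *
          ((-(k * V) * (R * V * s) - (A - k * R) * ((V * V + R * deriv (deriv r) t) * s))
            / (R * V * s) ^ 2)) t :=
      (Real.hasDerivAt_arctan _).comp t hu
    have hΘ' : HasDerivAt Θ (deriv θ t +
        (L / s) * ((1 / (1 + ((A - k * R) / (R * V * s)) ^ 2)) *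
          ((-(k * V) * (R * V * s) - (A - k * R) * ((V * V + R * deriv (deriv r) t) * s))
            / (R * V * s) ^ 2))) t :=
      (hθd t).hasDerivAt.add (harc.const_mul (L / s))
    have huval : ((-(k * V) * (R * V * s) - (A - k * R) * ((V * V + R * deriv (deriv r) t) * s))
          / (R * V * s) ^ 2) = -(k ^ 2 + 2 * E * A) / (s * R ^ 2 * V ^ 2) := by
      rw [hr'']
      field_simp
      linear_combination (-A) * hEn
    rw [huval, hθ'] at hΘ'
    convert hΘ' using 1
    have h1u : (0:ℝ) < 1 + ((A - k * R) / (R * V * s)) ^ 2 := by positivity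
    have : L / R ^ 2 + (L / s) * ((1 / (1 + ((A - k * R) / (R * V * s)) ^ 2)) *
        (-(k ^ 2 + 2 * E * A) / (s * R ^ 2 * V ^ 2))) = 0 := by
      field_simp
      linear_combination (L * A) * hEn + (L * R ^ 2 * V ^ 2) * hs2
    linarith [this]
  intro t₁ ht₁ t₂ ht₂
  have hdiff : DifferentiableOn ℝ Θ (Set.Ioo a b) := fun t ht =>
    ((key t ht).differentiableAt).differentiableWithinAt
  have hfz : ∀ t ∈ Set.Ioo a b, fderivWithin ℝ Θ (Set.Ioo a b) t = 0 := by
    intro t ht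
    rw [fderivWithin_of_isOpen isOpen_Ioo ht]
    have := (key t ht).hasFDerivAt.fderiv
    rw [this]
    ext
    simp
  have := (convex_Ioo a b).is_const_of_fderivWithin_eq_zero hdiff hfz ht₁ ht₂
  simpa [hΘdef] using this
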